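/- Let α, β, λ be real numbers and B(λ) = [[1 − α(1+β)λ, β²], [−αλ, β]]. Then the spectral (operator 2-) norm of B(λ) equals R_λ(α, β) = (1/√2)(C_λ(α, β) + √(C_λ(α, β)² − 4β²(1 − αλ)²))^{1/2}, where C_λ(α, β) = (1 − α(1+β)λ)² + α²λ² + β²(β² + 1). Equivalently, R_λ(α, β)² is the largest root of ξ² − C_λ(α, β)ξ + β²(1 − αλ)² = 0, the characteristic polynomial of B(λ)ᵀB(λ). -/

import Mathlib

open Matrix Polynomial

/-- The 2×2 matrix `B(λ)` from the analysis of Nesterov's method. -/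
noncomputable def Bmat (α β lam : ℝ) : Matrix (Fin 2) (Fin 2) ℝ :=
  !![1 - α * (1 + β) * lam, β ^ 2; -(α * lam), β]

/-- The spectral (operator 2-) norm of a real matrix, i.e. its largest singular value:
the operator norm of the induced linear map between Euclidean spaces. -/
noncomputable def spectralNorm2 {m n : Type*} [Fintype m] [Fintype n] [DecidableEq n]
    (A : Matrix m n ℝ) : ℝ :=
  ‖LinearMap.toContinuousLinearMap (Matrix.toEuclideanLin A)‖

/-- `C_λ(α, β)`. -/
noncomputable def Clam (α β lam : ℝ) : ℝ :=
  (1 - α * (1 + β) * lam) ^ 2 + α ^ 2 * lam ^ 2 + β ^ 2 * (β ^ 2 + 1)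

/-- `R_λ(α, β) = (1/√2)(C_λ + √(C_λ² − 4β²(1−αλ)²))^{1/2}`. -/
noncomputable def Rlam (α β lam : ℝ) : ℝ :=
  (1 / Real.sqrt 2) *
    Real.sqrt (Clam α β lam +
      Real.sqrt ((Clam α β lam) ^ 2 - 4 * β ^ 2 * (1 - α * lam) ^ 2))

/-! ### Auxiliary lemmas -/

/-- A `2 × 2` quadratic form with nonnegative diagonal and vanishing determinant is
positive semidefinite. -/
lemma aux_form_nonneg (A' C' r x y : ℝ) (hA : 0 ≤ A') (hC : 0 ≤ C') (h : A' * C' = r ^ 2) :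
    0 ≤ A' * x ^ 2 - 2 * r * x * y + C' * y ^ 2 := by
  rcases (add_nonneg hA hC).eq_or_lt with h0 | h0
  · have hA0 : A' = 0 := by linarith
    have hC0 : C' = 0 := by linarith
    have hr : r = 0 := by nlinarith
    simp [hA0, hC0, hr]
  · have key : (A' + C') * (A' * x ^ 2 - 2 * r * x * y + C' * y ^ 2)
        = (A' * x - r * y) ^ 2 + (r * x - C' * y) ^ 2 := by
      linear_combination (x ^ 2 + y ^ 2) * h
    nlinarith [sq_nonneg (A' * x - r * y), sq_nonneg (r * x - C' * y)]

lemma aux_euc_norm (w : Fin 2 → ℝ) :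
    ‖(WithLp.equiv 2 (Fin 2 → ℝ)).symm w‖ = Real.sqrt (w 0 ^ 2 + w 1 ^ 2) := by
  rw [EuclideanSpace.norm_eq]
  simp [Fin.sum_univ_two, sq_abs]

lemma aux_mulVec_fin2 (A : Matrix (Fin 2) (Fin 2) ℝ) (w : Fin 2 → ℝ) :
    A *ᵥ w = ![A 0 0 * w 0 + A 0 1 * w 1, A 1 0 * w 0 + A 1 1 * w 1] := by
  funext i
  fin_cases i <;> simp [Matrix.mulVec, dotProduct, Fin.sum_univ_two]

/-- Characterisation of the spectral norm of a `2 × 2` real matrix. -/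
lemma aux_spectralNorm2_eq (A : Matrix (Fin 2) (Fin 2) ℝ) (μ : ℝ) (hμ : 0 ≤ μ)
    (hub : ∀ x y : ℝ, (A 0 0 * x + A 0 1 * y) ^ 2 + (A 1 0 * x + A 1 1 * y) ^ 2
      ≤ μ ^ 2 * (x ^ 2 + y ^ 2))
    (hex : ∃ x y : ℝ, (x ≠ 0 ∨ y ≠ 0) ∧
      (A 0 0 * x + A 0 1 * y) ^ 2 + (A 1 0 * x + A 1 1 * y) ^ 2 = μ ^ 2 * (x ^ 2 + y ^ 2)) :
    spectralNorm2 A = μ := by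
  set T := LinearMap.toContinuousLinearMap (Matrix.toEuclideanLin A) with hT
  have happ : ∀ w : Fin 2 → ℝ, T ((WithLp.equiv 2 (Fin 2 → ℝ)).symm w)
      = (WithLp.equiv 2 (Fin 2 → ℝ)).symm (A *ᵥ w) := by
    intro w; simp [hT, Matrix.toEuclideanLin_toLp]
  have hnorm : ∀ w : Fin 2 → ℝ, ‖T ((WithLp.equiv 2 (Fin 2 → ℝ)).symm w)‖
      = Real.sqrt ((A 0 0 * w 0 + A 0 1 * w 1) ^ 2 + (A 1 0 * w 0 + A 1 1 * w 1) ^ 2) := by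
    intro w
    rw [happ, aux_euc_norm, aux_mulVec_fin2]
    simp
  refine le_antisymm ?_ ?_
  · refine ContinuousLinearMap.opNorm_le_bound _ hμ fun v => ?_
    have hv : v = (WithLp.equiv 2 (Fin 2 → ℝ)).symm (WithLp.equiv 2 (Fin 2 → ℝ) v) := rfl
    set w : Fin 2 → ℝ := WithLp.equiv 2 (Fin 2 → ℝ) v with hw
    rw [hv, hnorm, aux_euc_norm]
    rw [show μ * Real.sqrt (w 0 ^ 2 + w 1 ^ 2)
        = Real.sqrt (μ ^ 2 * (w 0 ^ 2 + w 1 ^ 2)) by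
      rw [Real.sqrt_mul (by positivity), Real.sqrt_sq hμ]]
    exact Real.sqrt_le_sqrt (hub (w 0) (w 1))
  · obtain ⟨x, y, h0, heq⟩ := hex
    set w : Fin 2 → ℝ := ![x, y] with hw
    have hw0 : w 0 = x := rfl
    have hw1 : w 1 = y := rfl
    have hpos : 0 < Real.sqrt (x ^ 2 + y ^ 2) := by
      apply Real.sqrt_pos.2
      rcases h0 with h | h <;> positivity
    have hle := T.le_opNorm ((WithLp.equiv 2 (Fin 2 → ℝ)).symm w)
    rw [hnorm, aux_euc_norm, hw0, hw1, heq] at hle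
    rw [show μ ^ 2 * (x ^ 2 + y ^ 2) = (μ * Real.sqrt (x ^ 2 + y ^ 2)) ^ 2 by
      rw [mul_pow, Real.sq_sqrt (by positivity)], Real.sqrt_sq (by positivity)] at hle
    calc μ = μ * Real.sqrt (x ^ 2 + y ^ 2) / Real.sqrt (x ^ 2 + y ^ 2) := by
            field_simp
      _ ≤ ‖T‖ * Real.sqrt (x ^ 2 + y ^ 2) / Real.sqrt (x ^ 2 + y ^ 2) := by gcongr
      _ = ‖T‖ := by field_simp

/-- Key algebraic facts about the largest root `M` of the characteristic polynomial of
`AᵀA` for a `2 × 2` matrix `A = !![a, b; c, d]`. -/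
lemma aux_key_facts (a b c d Cc D s M : ℝ) (hCc : Cc = a^2+b^2+c^2+d^2)
    (hD : D = (a*d-b*c)^2) (hs : s = Real.sqrt (Cc^2 - 4*D)) (hM : M = (Cc + s)/2) :
    (M^2 - Cc*M + D = 0) ∧ (a^2+c^2 ≤ M) ∧ (b^2+d^2 ≤ M) ∧
      ((M - (a^2+c^2)) * (M - (b^2+d^2)) = (a*b+c*d)^2) ∧ 0 ≤ M ∧ 0 ≤ s ∧
      s^2 = Cc^2 - 4*D := by
  have hd : 0 ≤ Cc^2 - 4*D := by
    have h : Cc^2 - 4*D = (a^2+c^2-b^2-d^2)^2 + 4*(a*b+c*d)^2 := by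
      rw [hCc, hD]; ring
    rw [h]; positivity
  have hs2 : s^2 = Cc^2 - 4*D := by rw [hs]; exact Real.sq_sqrt hd
  have hs0 : 0 ≤ s := by rw [hs]; exact Real.sqrt_nonneg _
  have hC0 : 0 ≤ Cc := by rw [hCc]; positivity
  have hquad : M^2 - Cc*M + D = 0 := by
    rw [hM]; linear_combination hs2/4
  have hdiff : s^2 = (a^2+c^2-(b^2+d^2))^2 + 4*(a*b+c*d)^2 := by
    rw [hs2, hCc, hD]; ring
  have hp : a^2+c^2 ≤ M := by
    rw [hM, hCc]; nlinarith [hs0, hdiff, sq_nonneg (a*b+c*d)]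
  have hq : b^2+d^2 ≤ M := by
    rw [hM, hCc]; nlinarith [hs0, hdiff, sq_nonneg (a*b+c*d)]
  have hAC : (M - (a^2+c^2)) * (M - (b^2+d^2)) = (a*b+c*d)^2 := by
    have h2 : (M - (a^2+c^2)) * (M - (b^2+d^2))
        = M^2 - Cc*M + D + ((a^2+c^2)*(b^2+d^2) - D) := by
      rw [hCc]; ring
    rw [h2, hquad, hD]; ring
  exact ⟨hquad, hp, hq, hAC, by rw [hM]; positivity, hs0, hs2⟩

/-- The spectral norm of a `2 × 2` matrix is `√M`, where `M` is the largest root of the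
characteristic polynomial of `AᵀA`. -/
lemma aux_main (a b c d M μ : ℝ)
    (hp : a^2+c^2 ≤ M) (hq : b^2+d^2 ≤ M)
    (hAC : (M - (a^2+c^2)) * (M - (b^2+d^2)) = (a*b+c*d)^2)
    (hM0 : 0 ≤ M) (hμ : μ = Real.sqrt M)
    (A : Matrix (Fin 2) (Fin 2) ℝ)
    (e00 : A 0 0 = a) (e01 : A 0 1 = b) (e10 : A 1 0 = c) (e11 : A 1 1 = d) :
    spectralNorm2 A = μ := by
  have hμ0 : 0 ≤ μ := by rw [hμ]; exact Real.sqrt_nonneg _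
  have hμ2 : μ ^ 2 = M := by rw [hμ]; exact Real.sq_sqrt hM0
  refine aux_spectralNorm2_eq A μ hμ0 ?_ ?_
  · intro x y
    rw [e00, e01, e10, e11, hμ2]
    nlinarith [aux_form_nonneg (M - (a^2+c^2)) (M - (b^2+d^2)) (a*b+c*d) x y
      (by linarith) (by linarith) hAC]
  · rw [e00, e01, e10, e11]
    by_cases hr : a*b+c*d = 0
    · have hpq : (M - (a^2+c^2)) * (M - (b^2+d^2)) = 0 := by rw [hAC, hr]; ring
      rcases mul_eq_zero.1 hpq with h | h
      · refine ⟨1, 0, Or.inl one_ne_zero, ?_⟩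
        have hM : M = a^2+c^2 := by linarith
        rw [hμ2, hM]; ring
      · refine ⟨0, 1, Or.inr one_ne_zero, ?_⟩
        have hM : M = b^2+d^2 := by linarith
        rw [hμ2, hM]; ring
    · refine ⟨a*b+c*d, M - (a^2+c^2), Or.inl hr, ?_⟩
      rw [hμ2]
      linear_combination (-(M - (a^2+c^2))) * hAC

/-- The spectral norm of `B(λ)` equals `R_λ(α, β)`; equivalently,
`R_λ(α, β)²` is the largest root of `ξ² − C_λ ξ + β²(1−αλ)² = 0`, the characteristic
polynomial of `B(λ)ᵀ B(λ)`. -/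
theorem stmt14 (α β lam : ℝ) :
    spectralNorm2 (Bmat α β lam) = Rlam α β lam ∧
    ((Bmat α β lam)ᵀ * Bmat α β lam).charpoly =
      X ^ 2 - C (Clam α β lam) * X + C (β ^ 2 * (1 - α * lam) ^ 2) ∧
    ((Rlam α β lam ^ 2) ^ 2 - Clam α β lam * (Rlam α β lam ^ 2)
        + β ^ 2 * (1 - α * lam) ^ 2 = 0) ∧
    (∀ ξ : ℝ, ξ ^ 2 - Clam α β lam * ξ + β ^ 2 * (1 - α * lam) ^ 2 = 0 →
      ξ ≤ Rlam α β lam ^ 2) := by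
  have hC0 : 0 ≤ Clam α β lam := by rw [Clam]; positivity
  have hsarg : (Clam α β lam) ^ 2 - 4 * β ^ 2 * (1 - α * lam) ^ 2
      = (Clam α β lam)^2 - 4*(β ^ 2 * (1 - α * lam) ^ 2) := by ring
  obtain ⟨hquad, hp, hq, hAC, hM0, hs0, hs2⟩ :=
    aux_key_facts (1 - α * (1 + β) * lam) (β ^ 2) (-(α * lam)) β
      (Clam α β lam) (β ^ 2 * (1 - α * lam) ^ 2)
      (Real.sqrt ((Clam α β lam)^2 - 4*(β ^ 2 * (1 - α * lam) ^ 2)))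
      ((Clam α β lam + Real.sqrt ((Clam α β lam)^2 - 4*(β ^ 2 * (1 - α * lam) ^ 2)))/2)
      (by rw [Clam]; ring) (by ring) rfl rfl
  set s : ℝ := Real.sqrt ((Clam α β lam)^2 - 4*(β ^ 2 * (1 - α * lam) ^ 2)) with hsdef
  set M : ℝ := (Clam α β lam + s)/2 with hMdef
  have hRμ : Rlam α β lam = Real.sqrt M := by
    rw [Rlam, hsarg, ← hsdef, hMdef,
      Real.sqrt_div (by positivity : (0:ℝ) ≤ Clam α β lam + s) 2]
    ring
  have hμ2 : Rlam α β lam ^ 2 = M := by rw [hRμ]; exact Real.sq_sqrt hM0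
  refine ⟨?_, ?_, ?_, ?_⟩
  · -- spectral norm
    exact aux_main (1 - α * (1 + β) * lam) (β ^ 2) (-(α * lam)) β M (Rlam α β lam)
      hp hq hAC hM0 hRμ (Bmat α β lam)
      (by simp [Bmat]) (by simp [Bmat]) (by simp [Bmat]) (by simp [Bmat])
  · -- charpoly
    set N := (Bmat α β lam)ᵀ * Bmat α β lam with hN
    have h00 : N 0 0 = (1 - α * (1 + β) * lam)^2 + (α*lam)^2 := by
      simp [hN, Bmat, Matrix.mul_apply, Fin.sum_univ_two, Matrix.vecHead, Matrix.vecTail]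
      try ring
    have h01 : N 0 1 = (1 - α * (1 + β) * lam)*β^2 + (-(α*lam))*β := by
      simp [hN, Bmat, Matrix.mul_apply, Fin.sum_univ_two, Matrix.vecHead, Matrix.vecTail]
      try ring
    have h10 : N 1 0 = (1 - α * (1 + β) * lam)*β^2 + (-(α*lam))*β := by
      simp [hN, Bmat, Matrix.mul_apply, Fin.sum_univ_two, Matrix.vecHead, Matrix.vecTail]
      try ring
    have h11 : N 1 1 = β^4 + β^2 := by
      simp [hN, Bmat, Matrix.mul_apply, Fin.sum_univ_two, Matrix.vecHead, Matrix.vecTail]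
      try ring
    rw [Matrix.charpoly, Matrix.det_fin_two]
    simp only [charmatrix_apply_eq, charmatrix_apply_ne _ _ _ (by decide : (0:Fin 2) ≠ 1),
      charmatrix_apply_ne _ _ _ (by decide : (1:Fin 2) ≠ 0)]
    rw [h00, h01, h10, h11]
    have hc1 : Clam α β lam = ((1 - α * (1 + β) * lam)^2 + (α*lam)^2) + (β^4 + β^2) := by
      rw [Clam]; ring
    have hc2 : β ^ 2 * (1 - α * lam) ^ 2 =
        ((1 - α * (1 + β) * lam)^2 + (α*lam)^2) * (β^4 + β^2)
        - ((1 - α * (1 + β) * lam)*β^2 + (-(α*lam))*β)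
          * ((1 - α * (1 + β) * lam)*β^2 + (-(α*lam))*β) := by ring
    rw [hc1, hc2]
    simp only [map_add, map_sub, _root_.map_mul]
    ring
  · -- R² is a root
    rw [hμ2]
    linarith [hquad]
  · -- R² is the largest root
    intro ξ hξ
    have h1 : (2*ξ - Clam α β lam)^2 = s^2 := by
      linear_combination 4*hξ - hs2
    have h2 : 2*ξ - Clam α β lam ≤ s := by nlinarith [hs0, h1]
    rw [hμ2, hMdef]
    linarith
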